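/- Let G be a simple graph on a finite vertex set V and let H ⊆ V be nonempty. If the induced subgraph G[H] is connected and chordal, then Σ_{C} (−1)^{|C|−1} = 1, where the sum runs over all nonempty complete subsets C of H (i.e., nonempty cliques of G contained in H). -/

import Mathlib

open Finset

/-- A simple graph is chordal (decomposable) if every cycle of length at least 4
has a chord: two vertices of the cycle that are adjacent in the graph but not
consecutive along the cycle. -/
def IsChordal {α : Type} (G : SimpleGraph α) : Prop :=
  ∀ (v : α) (w : G.Walk v v), w.IsCycle → 4 ≤ w.length →
    ∃ x y, x ∈ w.support ∧ y ∈ w.support ∧ G.Adj x y ∧ s(x, y) ∉ w.edges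

/-- A finset is complete (a clique) if every two distinct vertices in it are adjacent. -/
def IsCompleteSet {α : Type} (G : SimpleGraph α) (C : Finset α) : Prop :=
  ∀ u ∈ C, ∀ v ∈ C, u ≠ v → G.Adj u v

instance {α : Type} [DecidableEq α] (G : SimpleGraph α) [DecidableRel G.Adj]
    (C : Finset α) : Decidable (IsCompleteSet G C) := by
  unfold IsCompleteSet; infer_instance

set_option linter.unusedSectionVars false

namespace CliqueAux

open SimpleGraph Walk

variable {α : Type} [DecidableEq α]

def WalkIn (Γ : SimpleGraph α) (K : Finset α) (x y : α) : Prop :=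
  ∃ w : Γ.Walk x y, ∀ z ∈ w.support, z ∈ K

variable {Γ : SimpleGraph α} {K K' : Finset α} {x y z : α}

lemma WalkIn.start_mem (h : WalkIn Γ K x y) : x ∈ K := by
  obtain ⟨w, hw⟩ := h; exact hw _ w.start_mem_support

lemma WalkIn.end_mem (h : WalkIn Γ K x y) : y ∈ K := by
  obtain ⟨w, hw⟩ := h; exact hw _ w.end_mem_support

lemma walkIn_refl (hx : x ∈ K) : WalkIn Γ K x x :=
  ⟨Walk.nil, by simpa using hx⟩

lemma WalkIn.symm (h : WalkIn Γ K x y) : WalkIn Γ K y x := by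
  obtain ⟨w, hw⟩ := h
  exact ⟨w.reverse, fun z hz => hw z (by simpa [Walk.support_reverse] using hz)⟩

lemma WalkIn.trans (h : WalkIn Γ K x y) (h' : WalkIn Γ K y z) : WalkIn Γ K x z := by
  obtain ⟨w, hw⟩ := h; obtain ⟨w', hw'⟩ := h'
  refine ⟨w.append w', fun u hu => ?_⟩
  rcases (Walk.mem_support_append_iff _ _).1 hu with h | h
  · exact hw _ h
  · exact hw' _ h

lemma WalkIn.adjExtend (h : WalkIn Γ K x y) (ha : Γ.Adj y z) (hz : z ∈ K) :
    WalkIn Γ K x z := by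
  obtain ⟨w, hw⟩ := h
  refine ⟨w.concat ha, fun u hu => ?_⟩
  rw [Walk.support_concat, List.mem_append, List.mem_singleton] at hu
  rcases hu with h | h
  · exact hw _ h
  · exact h ▸ hz

lemma WalkIn.mono (hKK : K ⊆ K') (h : WalkIn Γ K x y) : WalkIn Γ K' x y := by
  obtain ⟨w, hw⟩ := h; exact ⟨w, fun z hz => hKK (hw z hz)⟩


open Classical in
noncomputable def cliqueSum (Γ : SimpleGraph α) (K : Finset α) : ℤ :=
  ∑ C ∈ K.powerset.filter (fun C => C ≠ ∅ ∧ IsCompleteSet Γ C), (-1 : ℤ) ^ (C.card - 1)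

lemma cliqueSum_eq (Γ : SimpleGraph α) (K : Finset α)
    [inst : DecidablePred fun C : Finset α => C ≠ ∅ ∧ IsCompleteSet Γ C] :
    cliqueSum Γ K =
      ∑ C ∈ K.powerset.filter (fun C => C ≠ ∅ ∧ IsCompleteSet Γ C), (-1 : ℤ) ^ (C.card - 1) := by
  unfold cliqueSum
  congr 1
  exact Finset.filter_congr_decidable _ _ _

lemma completeSet_sum (Γ : SimpleGraph α) {K : Finset α} (hK : IsCompleteSet Γ K)
    (hne : K.Nonempty) : cliqueSum Γ K = 1 := by
  classical
  rw [cliqueSum_eq]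
  have hfilter : K.powerset.filter (fun C => C ≠ ∅ ∧ IsCompleteSet Γ C)
      = K.powerset.filter (fun C => C ≠ ∅) := by
    apply Finset.filter_congr
    intro C hC
    rw [Finset.mem_powerset] at hC
    constructor
    · exact fun h => h.1
    · exact fun h => ⟨h, fun u hu v hv huv => hK u (hC hu) v (hC hv) huv⟩
  rw [hfilter]
  have h0 : ∑ C ∈ K.powerset, (-1 : ℤ) ^ C.card = 0 :=
    Finset.sum_powerset_neg_one_pow_card_of_nonempty hne
  rw [← Finset.sum_filter_add_sum_filter_not K.powerset (fun C => C ≠ ∅)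
    (fun C => (-1 : ℤ) ^ C.card)] at h0
  have hfe : K.powerset.filter (fun C => ¬ C ≠ ∅) = {∅} := by
    ext C
    simp only [Finset.mem_filter, Finset.mem_powerset, not_not, Finset.mem_singleton]
    exact ⟨fun h => h.2, fun h => ⟨h ▸ Finset.empty_subset _, h⟩⟩
  rw [hfe, Finset.sum_singleton] at h0
  simp only [Finset.card_empty, pow_zero] at h0
  have h1 : ∑ C ∈ K.powerset.filter (fun C => C ≠ ∅), (-1 : ℤ) ^ C.card = -1 := by linarith
  have h2 : ∀ C ∈ K.powerset.filter (fun C => C ≠ ∅),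
      (-1 : ℤ) ^ (C.card - 1) = -((-1 : ℤ) ^ C.card) := by
    intro C hC
    rw [Finset.mem_filter] at hC
    have hc : C.card ≠ 0 := fun h => hC.2 (Finset.card_eq_zero.1 h)
    obtain ⟨m, hm⟩ := Nat.exists_eq_succ_of_ne_zero hc
    rw [hm]
    simp [pow_succ]
  rw [Finset.sum_congr rfl h2, Finset.sum_neg_distrib, h1]
  norm_num


lemma reachable_induce_of_walk {K : Finset α} :
    ∀ {x y : α} (w : Γ.Walk x y), (∀ z ∈ w.support, z ∈ K) →
      ∀ (hx : x ∈ (K : Set α)) (hy : y ∈ (K : Set α)),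
        (Γ.induce (K : Set α)).Reachable ⟨x, hx⟩ ⟨y, hy⟩ := by
  intro x y w
  induction w with
  | nil => intro _ hx hy; exact SimpleGraph.Reachable.refl _
  | @cons u c v h w ih =>
    intro hsup hx hy
    have hc : c ∈ (K : Set α) := by
      have : c ∈ w.support := w.start_mem_support
      exact Finset.mem_coe.2 (hsup c (by simp [this]))
    have hadj : (Γ.induce (K : Set α)).Adj ⟨u, hx⟩ ⟨c, hc⟩ := by
      simp only [SimpleGraph.comap_adj, Function.Embedding.coe_subtype]
      exact h
    exact hadj.reachable.trans (ih (fun z hz => hsup z (by simp [hz])) hc hy)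

lemma connected_of_walkIn {K : Finset α} (hne : K.Nonempty)
    (h : ∀ x ∈ K, ∀ y ∈ K, WalkIn Γ K x y) : (Γ.induce (K : Set α)).Connected := by
  rw [SimpleGraph.connected_iff]
  constructor
  · rintro ⟨x, hx⟩ ⟨y, hy⟩
    obtain ⟨w, hw⟩ := h x (Finset.mem_coe.1 hx) y (Finset.mem_coe.1 hy)
    exact reachable_induce_of_walk w hw hx hy
  · obtain ⟨x, hx⟩ := hne
    exact ⟨⟨x, Finset.mem_coe.2 hx⟩⟩

lemma walkIn_of_connected {K : Finset α} (h : (Γ.induce (K : Set α)).Connected)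
    (hx : x ∈ K) (hy : y ∈ K) : WalkIn Γ K x y := by
  obtain ⟨w⟩ := h.preconnected ⟨x, Finset.mem_coe.2 hx⟩ ⟨y, Finset.mem_coe.2 hy⟩
  refine ⟨w.map (SimpleGraph.Embedding.induce (K : Set α) (G := Γ)).toHom, fun z hz => ?_⟩
  have hz' : z ∈ (w.map (SimpleGraph.Embedding.induce (K : Set α) (G := Γ)).toHom).support := hz
  rw [Walk.support_map, List.mem_map] at hz'
  obtain ⟨z', _, rfl⟩ := hz'
  exact Finset.mem_coe.1 z'.2

lemma isChordal_induce {Γ : SimpleGraph α} (h : IsChordal Γ) (s : Set α) :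
    IsChordal (Γ.induce s) := by
  intro v w hcyc hlen
  set f := (SimpleGraph.Embedding.induce s (G := Γ)).toHom with hf
  have hinj : Function.Injective f := Subtype.val_injective
  have hcyc' : (w.map f).IsCycle := ((Walk.map_isCycle_iff_of_injective hinj).2 hcyc)
  have hlen' : 4 ≤ (w.map f).length := by rwa [Walk.length_map]
  obtain ⟨x, y, hx, hy, hadj, he⟩ := h _ (w.map f) hcyc' hlen'
  rw [Walk.support_map, List.mem_map] at hx hy
  obtain ⟨x', hx', rfl⟩ := hx
  obtain ⟨y', hy', rfl⟩ := hy
  refine ⟨x', y', hx', hy', ?_, ?_⟩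
  · exact hadj
  · intro hmem
    apply he
    rw [Walk.edges_map, List.mem_map]
    exact ⟨s(x', y'), hmem, rfl⟩


lemma cliqueSum_induce (Γ : SimpleGraph α) (K : Finset α) :
    cliqueSum (Γ.induce (K : Set α)) Finset.univ = cliqueSum Γ K := by
  classical
  rw [cliqueSum_eq, cliqueSum_eq]
  refine Finset.sum_bij (i := fun C _ => C.map (Function.Embedding.subtype _)) ?_ ?_ ?_ ?_
  · intro C hC
    rw [Finset.mem_filter, Finset.mem_powerset] at hC ⊢
    obtain ⟨-, hCne, hCcomp⟩ := hC
    refine ⟨?_, ?_, ?_⟩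
    · intro z hz
      rw [Finset.mem_map] at hz
      obtain ⟨c, _, rfl⟩ := hz
      exact Finset.mem_coe.1 c.2
    · intro h
      apply hCne
      rwa [← Finset.map_eq_empty (f := Function.Embedding.subtype _)]
    · intro u hu v hv huv
      rw [Finset.mem_map] at hu hv
      obtain ⟨u', hu', rfl⟩ := hu
      obtain ⟨v', hv', rfl⟩ := hv
      have : u' ≠ v' := fun h => huv (by rw [h])
      have := hCcomp u' hu' v' hv' this
      simpa only [SimpleGraph.comap_adj, Function.Embedding.coe_subtype] using this
  · intro C1 h1 C2 h2 heq
    exact Finset.map_injective _ heq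
  · intro C hC
    rw [Finset.mem_filter, Finset.mem_powerset] at hC
    obtain ⟨hCK, hCne, hCcomp⟩ := hC
    have hmem : ∀ c ∈ C, c ∈ (K : Set α) := fun c hc => Finset.mem_coe.2 (hCK hc)
    refine ⟨C.subtype (fun x => x ∈ (K : Set α)), ?_, ?_⟩
    · rw [Finset.mem_filter, Finset.mem_powerset]
      refine ⟨Finset.subset_univ _, ?_, ?_⟩
      · intro h
        apply hCne
        have := Finset.subtype_map (s := C) (fun x => x ∈ (K : Set α))
        rw [h, Finset.map_empty] at this
        rw [← Finset.filter_true_of_mem hmem]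
        exact this.symm
      · intro u hu v hv huv
        rw [Finset.mem_subtype] at hu hv
        have : (u : α) ≠ (v : α) := fun h => huv (Subtype.ext h)
        have := hCcomp u hu v hv this
        simpa only [SimpleGraph.comap_adj, Function.Embedding.coe_subtype] using this
    · show (Finset.subtype (fun x => x ∈ (K : Set α)) C).map (Function.Embedding.subtype _) = C
      rw [Finset.subtype_map, Finset.filter_true_of_mem hmem]
  · intro C hC
    rw [Finset.card_map]


lemma edge_mem_of_length_one {u v : α} {w : Γ.Walk u v} (h : w.length = 1) :
    s(u, v) ∈ w.edges := by
  cases w with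
  | nil => simp at h
  | cons hadj w' =>
    have h0 : w'.length = 0 := by simpa using h
    have hcv := w'.eq_of_length_eq_zero h0
    subst hcv
    simp

lemma exists_shorter {x y u v : α} (P : Γ.Walk x y) (hu : u ∈ P.support) (hv : v ∈ P.support)
    (ha : Γ.Adj u v) (he : s(u, v) ∉ P.edges) :
    ∃ Q : Γ.Walk x y, (∀ z ∈ Q.support, z ∈ P.support) ∧ Q.length < P.length := by
  by_cases hv' : v ∈ (P.dropUntil u hu).support
  · have hPlen : P.length = (P.takeUntil u hu).length + (P.dropUntil u hu).length := by
      conv_lhs => rw [← P.take_spec hu]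
      rw [Walk.length_append]
    have hdlen : (P.dropUntil u hu).length =
        ((P.dropUntil u hu).takeUntil v hv').length +
        ((P.dropUntil u hu).dropUntil v hv').length := by
      conv_lhs => rw [← (P.dropUntil u hu).take_spec hv']
      rw [Walk.length_append]
    have h0 : ((P.dropUntil u hu).takeUntil v hv').length ≠ 0 :=
      fun h0 => ha.ne (Walk.eq_of_length_eq_zero h0)
    have h1 : ((P.dropUntil u hu).takeUntil v hv').length ≠ 1 := by
      intro h1
      exact he (P.edges_dropUntil_subset hu
        ((P.dropUntil u hu).edges_takeUntil_subset hv' (edge_mem_of_length_one h1)))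
    refine ⟨(P.takeUntil u hu).append (Walk.cons ha ((P.dropUntil u hu).dropUntil v hv')), ?_, ?_⟩
    · intro z hz
      rcases (Walk.mem_support_append_iff _ _).1 hz with h | h
      · exact P.support_takeUntil_subset hu h
      · rw [Walk.support_cons, List.mem_cons] at h
        rcases h with rfl | h
        · exact hu
        · exact P.support_dropUntil_subset hu ((P.dropUntil u hu).support_dropUntil_subset hv' h)
    · rw [Walk.length_append, Walk.length_cons]
      omega
  · have hvt : v ∈ (P.takeUntil u hu).support := by
      have h2 := hv
      rw [← P.take_spec hu, Walk.mem_support_append_iff] at h2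
      rcases h2 with h | h
      · exact h
      · exact absurd h hv'
    have hPlen : P.length = (P.takeUntil u hu).length + (P.dropUntil u hu).length := by
      conv_lhs => rw [← P.take_spec hu]
      rw [Walk.length_append]
    have htlen : (P.takeUntil u hu).length =
        ((P.takeUntil u hu).takeUntil v hvt).length +
        ((P.takeUntil u hu).dropUntil v hvt).length := by
      conv_lhs => rw [← (P.takeUntil u hu).take_spec hvt]
      rw [Walk.length_append]
    have h0 : ((P.takeUntil u hu).dropUntil v hvt).length ≠ 0 :=
      fun h0 => ha.ne (Walk.eq_of_length_eq_zero h0).symm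
    have h1 : ((P.takeUntil u hu).dropUntil v hvt).length ≠ 1 := by
      intro h1
      apply he
      have := (P.takeUntil u hu).edges_dropUntil_subset hvt (edge_mem_of_length_one h1)
      have := P.edges_takeUntil_subset hu this
      rwa [Sym2.eq_swap] at this
    refine ⟨((P.takeUntil u hu).takeUntil v hvt).append
      (Walk.cons ha.symm (P.dropUntil u hu)), ?_, ?_⟩
    · intro z hz
      rcases (Walk.mem_support_append_iff _ _).1 hz with h | h
      · exact P.support_takeUntil_subset hu ((P.takeUntil u hu).support_takeUntil_subset hvt h)
      · rw [Walk.support_cons, List.mem_cons] at h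
        rcases h with rfl | h
        · exact hv
        · exact P.support_dropUntil_subset hu h
    · rw [Walk.length_append, Walk.length_cons]
      omega


lemma card_coe_set (K : Finset α) : Fintype.card ((K : Set α) : Type) = K.card := by
  simp

lemma main : ∀ (n : ℕ) (α : Type) [DecidableEq α] [Fintype α] (Γ : SimpleGraph α),
    Fintype.card α ≤ n → Γ.Connected → IsChordal Γ → cliqueSum Γ Finset.univ = 1 := by
  intro n
  induction n with
  | zero =>
    intro α _ _ Γ hcard hconn _
    have : Nonempty α := hconn.nonempty
    have := Fintype.card_pos (α := α)
    omega
  | succ n ih =>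
    intro α _ _ Γ hcard hconn hchordal
    classical
    have hNE : Nonempty α := hconn.nonempty
    by_cases hcomp : IsCompleteSet Γ (Finset.univ : Finset α)
    · exact completeSet_sum Γ hcomp Finset.univ_nonempty
    · rw [IsCompleteSet] at hcomp
      push_neg at hcomp
      obtain ⟨a, -, b, -, hab, hnadj⟩ := hcomp
      -- minimal separator
      have hFne : (Finset.univ.powerset.filter
          (fun S => a ∉ S ∧ b ∉ S ∧ ¬ WalkIn Γ (Finset.univ \ S) a b)).Nonempty := by
        refine ⟨Finset.univ \ {a, b}, ?_⟩
        rw [Finset.mem_filter]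
        have hUU : Finset.univ \ (Finset.univ \ ({a, b} : Finset α)) = {a, b} := by
          rw [sdiff_sdiff_right_self, Finset.inf_eq_inter, Finset.univ_inter]
        refine ⟨Finset.mem_powerset.2 (Finset.subset_univ _), by simp, by simp, ?_⟩
        rw [hUU]
        rintro ⟨w, hw⟩
        cases w with
        | nil => exact hab rfl
        | @cons _ c _ h w' =>
          have hc : c ∈ ({a, b} : Finset α) :=
            hw _ (by simp [Walk.support_cons, w'.start_mem_support])
          rcases Finset.mem_insert.1 hc with rfl | hcb
          · exact Γ.irrefl h
          · rw [Finset.mem_singleton] at hcb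
            subst hcb
            exact hnadj h
      obtain ⟨S, hSF, hSmin⟩ := Finset.exists_min_image _ Finset.card hFne
      rw [Finset.mem_filter] at hSF
      obtain ⟨-, haS, hbS, hsep⟩ := hSF
      have hErase : ∀ s ∈ S, WalkIn Γ (Finset.univ \ S.erase s) a b := by
        intro s hs
        by_contra hn
        have hmem : S.erase s ∈ Finset.univ.powerset.filter
            (fun S => a ∉ S ∧ b ∉ S ∧ ¬ WalkIn Γ (Finset.univ \ S) a b) := by
          rw [Finset.mem_filter]
          exact ⟨Finset.mem_powerset.2 (Finset.subset_univ _),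
            ⟨fun h => haS (Finset.mem_of_mem_erase h),
             fun h => hbS (Finset.mem_of_mem_erase h), hn⟩⟩
        have h1 := hSmin _ hmem
        have h2 := Finset.card_erase_lt_of_mem hs
        omega
      -- the component of a
      set A := Finset.univ.filter (fun x => WalkIn Γ (Finset.univ \ S) a x) with hA
      have hmemA : ∀ x, x ∈ A ↔ WalkIn Γ (Finset.univ \ S) a x := by
        intro x; rw [hA, Finset.mem_filter]; simp
      have hAS : ∀ x ∈ A, x ∉ S := by
        intro x hx hxS
        have h1 := ((hmemA x).1 hx).end_mem
        rw [Finset.mem_sdiff] at h1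
        exact h1.2 hxS
      have haA : a ∈ A := (hmemA a).2 (walkIn_refl (by simp [Finset.mem_sdiff, haS]))
      have hbA : b ∉ A := fun h => hsep ((hmemA b).1 h)
      have hAclosed : ∀ x y, x ∈ A → Γ.Adj x y → y ∉ S → y ∈ A := by
        intro x y hx hxy hyS
        exact (hmemA y).2 (((hmemA x).1 hx).adjExtend hxy (by simp [Finset.mem_sdiff, hyS]))
      have hSne : S.Nonempty := by
        rw [Finset.nonempty_iff_ne_empty]
        rintro rfl
        obtain ⟨w⟩ := hconn.preconnected a b
        exact hsep ⟨w, by simp⟩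
      -- walks in univ \ S starting in a closed set stay in it
      have walkGen : ∀ (T : Finset α), (∀ x y, x ∈ T → Γ.Adj x y → y ∉ S → y ∈ T) →
          ∀ (p q : α) (w : Γ.Walk p q), (∀ z ∈ w.support, z ∈ Finset.univ \ S) →
          p ∈ T → ∀ z ∈ w.support, z ∈ T := by
        intro T hT p q w
        induction w with
        | nil =>
          intro _ hp z hz
          rw [Walk.support_nil, List.mem_singleton] at hz
          exact hz ▸ hp
        | @cons u c v h w ih =>
          intro hsup hp z hz
          have hcA : c ∈ T := by
            refine hT u c hp h ?_
            have h1 := hsup c (by simp [w.start_mem_support])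
            rw [Finset.mem_sdiff] at h1
            exact h1.2
          rw [Walk.support_cons, List.mem_cons] at hz
          rcases hz with rfl | hz
          · exact hp
          · exact ih (fun z hz => hsup z (by simp [hz])) hcA z hz
      -- every separator vertex has a neighbour in the component of p
      have key : ∀ (p q : α), p ∉ S → ¬ WalkIn Γ (Finset.univ \ S) p q →
          (∀ s ∈ S, WalkIn Γ (Finset.univ \ S.erase s) p q) →
          ∀ s ∈ S, ∃ c, WalkIn Γ (Finset.univ \ S) p c ∧ Γ.Adj s c := by
        intro p q hpS hpq hpq' s hs
        obtain ⟨w, hw⟩ := hpq' s hs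
        have hsw : s ∈ w.support := by
          by_contra hsw
          refine hpq ⟨w, fun z hz => ?_⟩
          have hz' := hw z hz
          rw [Finset.mem_sdiff] at hz' ⊢
          refine ⟨hz'.1, fun hzS => ?_⟩
          exact hz'.2 (Finset.mem_erase.2 ⟨fun h => hsw (h ▸ hz), hzS⟩)
        have hcount : (w.takeUntil s hsw).support.count s = 1 :=
          w.count_support_takeUntil_eq_one hsw
        have hps : p ≠ s := fun h => hpS (h ▸ hs)
        have hrnil : ¬ (w.takeUntil s hsw).reverse.Nil := by
          rw [Walk.not_nil_iff_lt_length, Walk.length_reverse]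
          rcases Nat.eq_zero_or_pos (w.takeUntil s hsw).length with h | h
          · exact absurd (Walk.eq_of_length_eq_zero h) hps
          · exact h
        obtain ⟨c, hadj, q', hq⟩ := Walk.not_nil_iff.1 hrnil
        have hqsup : (w.takeUntil s hsw).support.reverse = (Walk.cons hadj q').support := by
          rw [← Walk.support_reverse, hq]
        have hcount2 : (Walk.cons hadj q').support.count s = 1 := by
          rw [← hqsup, List.count_reverse]
          exact hcount
        have h3 : q'.support.count s = 0 := by
          rw [Walk.support_cons, List.count_cons_self] at hcount2
          omega
        have hsq : s ∉ q'.support := by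
          rw [← List.count_eq_zero]
          exact h3
        have hcq : c ∈ (w.takeUntil s hsw).support := by
          rw [← List.mem_reverse, hqsup, Walk.support_cons]
          exact List.mem_cons_of_mem _ q'.start_mem_support
        have hcs : c ≠ s := fun h => hsq (h ▸ q'.start_mem_support)
        have hst2 : s ∉ ((w.takeUntil s hsw).takeUntil c hcq).support := by
          intro hmem
          have hdec : (w.takeUntil s hsw).support =
              ((w.takeUntil s hsw).takeUntil c hcq).support ++
              ((w.takeUntil s hsw).dropUntil c hcq).support.tail := by
            conv_lhs => rw [← (w.takeUntil s hsw).take_spec hcq]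
            rw [Walk.support_append]
          have hdropnil : ¬ ((w.takeUntil s hsw).dropUntil c hcq).Nil := by
            rw [Walk.not_nil_iff_lt_length]
            rcases Nat.eq_zero_or_pos ((w.takeUntil s hsw).dropUntil c hcq).length with h | h
            · exact absurd (Walk.eq_of_length_eq_zero h) hcs
            · exact h
          obtain ⟨c2, hadj2, q2, hq2⟩ := Walk.not_nil_iff.1 hdropnil
          have hstail : s ∈ ((w.takeUntil s hsw).dropUntil c hcq).support.tail := by
            rw [hq2, Walk.support_cons, List.tail_cons]
            exact q2.end_mem_support
          have hge : 2 ≤ (w.takeUntil s hsw).support.count s := by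
            rw [hdec, List.count_append]
            have h1 : 0 < ((w.takeUntil s hsw).takeUntil c hcq).support.count s :=
              List.count_pos_iff.2 hmem
            have h2 : 0 < (((w.takeUntil s hsw).dropUntil c hcq).support.tail).count s :=
              List.count_pos_iff.2 hstail
            omega
          omega
        refine ⟨c, ⟨(w.takeUntil s hsw).takeUntil c hcq, fun z hz => ?_⟩, hadj⟩
        have hz1 : z ∈ (w.takeUntil s hsw).support :=
          (w.takeUntil s hsw).support_takeUntil_subset hcq hz
        have hz2 : z ∈ w.support := w.support_takeUntil_subset hsw hz1
        have hz3 := hw z hz2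
        rw [Finset.mem_sdiff] at hz3 ⊢
        refine ⟨hz3.1, fun hzS => ?_⟩
        have hzs : z ≠ s := fun h => hst2 (h ▸ hz)
        exact hz3.2 (Finset.mem_erase.2 ⟨hzs, hzS⟩)
      have hSA : ∀ s ∈ S, ∃ c, c ∈ A ∧ Γ.Adj s c := by
        intro s hs
        obtain ⟨c, hc, hadj⟩ := key a b haS hsep (fun s hs => hErase s hs) s hs
        exact ⟨c, (hmemA c).2 hc, hadj⟩
      set B := Finset.univ.filter (fun x => WalkIn Γ (Finset.univ \ S) b x) with hB
      have hmemB : ∀ x, x ∈ B ↔ WalkIn Γ (Finset.univ \ S) b x := by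
        intro x; rw [hB, Finset.mem_filter]; simp
      have hBS : ∀ x ∈ B, x ∉ S := by
        intro x hx hxS
        have h1 := ((hmemB x).1 hx).end_mem
        rw [Finset.mem_sdiff] at h1
        exact h1.2 hxS
      have hbB : b ∈ B := (hmemB b).2 (walkIn_refl (by simp [Finset.mem_sdiff, hbS]))
      have hBclosed : ∀ x y, x ∈ B → Γ.Adj x y → y ∉ S → y ∈ B := by
        intro x y hx hxy hyS
        exact (hmemB y).2 (((hmemB x).1 hx).adjExtend hxy (by simp [Finset.mem_sdiff, hyS]))
      have hSB : ∀ s ∈ S, ∃ c, c ∈ B ∧ Γ.Adj s c := by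
        intro s hs
        obtain ⟨c, hc, hadj⟩ := key b a hbS (fun h => hsep h.symm)
          (fun s hs => (hErase s hs).symm) s hs
        exact ⟨c, (hmemB c).2 hc, hadj⟩
      have hABdisj : ∀ x, x ∈ A → x ∈ B → False := by
        intro x hxA hxB
        exact hsep (((hmemA x).1 hxA).trans ((hmemB x).1 hxB).symm)
      have hSclique : IsCompleteSet Γ S := by
        intro x hx y hy hxy
        by_contra hnadjxy
        obtain ⟨cx, hcxA, hxcx⟩ := hSA x hx
        obtain ⟨cy, hcyA, hycy⟩ := hSA y hy
        obtain ⟨cx', hcxB, hxcx'⟩ := hSB x hx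
        obtain ⟨cy', hcyB, hycy'⟩ := hSB y hy
        have hxS : x ∈ S := hx
        have hyS : y ∈ S := hy
        -- a walk from cx to cy with support in A
        have hAA : WalkIn Γ A cx cy := by
          obtain ⟨w, hw⟩ := ((hmemA cx).1 hcxA).symm.trans ((hmemA cy).1 hcyA)
          exact ⟨w, walkGen A hAclosed _ _ w hw hcxA⟩
        obtain ⟨wA, hwA⟩ := hAA
        have hBB : WalkIn Γ B cx' cy' := by
          obtain ⟨w, hw⟩ := ((hmemB cx').1 hcxB).symm.trans ((hmemB cy').1 hcyB)
          exact ⟨w, walkGen B hBclosed _ _ w hw hcxB⟩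
        obtain ⟨wB, hwB⟩ := hBB
        have hexA : ∃ m, ∃ w : Γ.Walk x y,
            (∀ z ∈ w.support, z ∈ insert x (insert y A)) ∧ w.length = m := by
          refine ⟨_, Walk.cons hxcx (wA.concat hycy.symm), ?_, rfl⟩
          intro z hz
          rw [Walk.support_cons, List.mem_cons] at hz
          rcases hz with rfl | hz
          · exact Finset.mem_insert_self _ _
          · rw [Walk.support_concat, List.mem_append,
              List.mem_singleton] at hz
            rcases hz with hz | rfl
            · exact Finset.mem_insert_of_mem (Finset.mem_insert_of_mem (hwA _ hz))
            · exact Finset.mem_insert_of_mem (Finset.mem_insert_self _ _)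
        have hexB : ∃ m, ∃ w : Γ.Walk y x,
            (∀ z ∈ w.support, z ∈ insert y (insert x B)) ∧ w.length = m := by
          refine ⟨_, Walk.cons hycy' ((wB.reverse).concat hxcx'.symm), ?_, rfl⟩
          intro z hz
          rw [Walk.support_cons, List.mem_cons] at hz
          rcases hz with rfl | hz
          · exact Finset.mem_insert_self _ _
          · rw [Walk.support_concat, List.mem_append,
              List.mem_singleton] at hz
            rcases hz with hz | rfl
            · rw [Walk.support_reverse, List.mem_reverse] at hz
              exact Finset.mem_insert_of_mem (Finset.mem_insert_of_mem (hwB _ hz))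
            · exact Finset.mem_insert_of_mem (Finset.mem_insert_self _ _)
        obtain ⟨W1, hW1sup, hW1len⟩ := Nat.find_spec hexA
        obtain ⟨W2, hW2sup, hW2len⟩ := Nat.find_spec hexB
        set P1 := W1.bypass with hP1def
        set P2 := W2.bypass with hP2def
        have hP1path : P1.IsPath := W1.bypass_isPath
        have hP2path : P2.IsPath := W2.bypass_isPath
        have hP1sup : ∀ z ∈ P1.support, z ∈ insert x (insert y A) :=
          fun z hz => hW1sup z (W1.support_bypass_subset hz)
        have hP2sup : ∀ z ∈ P2.support, z ∈ insert y (insert x B) :=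
          fun z hz => hW2sup z (W2.support_bypass_subset hz)
        have hP1len : P1.length = Nat.find hexA := by
          refine le_antisymm ?_ (Nat.find_min' hexA ⟨P1, hP1sup, rfl⟩)
          rw [← hW1len]
          exact W1.length_bypass_le
        have hP2len : P2.length = Nat.find hexB := by
          refine le_antisymm ?_ (Nat.find_min' hexB ⟨P2, hP2sup, rfl⟩)
          rw [← hW2len]
          exact W2.length_bypass_le
        have hP1two : 2 ≤ P1.length := by
          have h0 : P1.length ≠ 0 := fun h => hxy (Walk.eq_of_length_eq_zero h)
          have h1 : P1.length ≠ 1 := fun h => hnadjxy (Walk.adj_of_length_eq_one h)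
          omega
        have hP2two : 2 ≤ P2.length := by
          have h0 : P2.length ≠ 0 := fun h => hxy (Walk.eq_of_length_eq_zero h).symm
          have h1 : P2.length ≠ 1 := fun h => hnadjxy (Walk.adj_of_length_eq_one h).symm
          omega
        have hxA : x ∉ A := fun h => hAS x h hxS
        have hyA : y ∉ A := fun h => hAS y h hyS
        have hxB : x ∉ B := fun h => hBS x h hxS
        have hyB : y ∉ B := fun h => hBS y h hyS
        have hinter : ∀ z, z ∈ P1.support → z ∈ P2.support → z = x ∨ z = y := by
          intro z h1 h2
          have h1' := hP1sup z h1
          have h2' := hP2sup z h2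
          rw [Finset.mem_insert, Finset.mem_insert] at h1' h2'
          rcases h1' with rfl | rfl | h1'
          · exact Or.inl rfl
          · exact Or.inr rfl
          · rcases h2' with rfl | rfl | h2'
            · exact Or.inr rfl
            · exact Or.inl rfl
            · exact absurd h2' (fun h => hABdisj z h1' h)
        have hcyc : (P1.append P2).IsCycle := by
          rw [Walk.isCycle_def]
          refine ⟨?_, ?_, ?_⟩
          · rw [Walk.isTrail_def, Walk.edges_append]
            refine List.Nodup.append hP1path.isTrail.edges_nodup hP2path.isTrail.edges_nodup ?_
            intro e he1 he2
            revert he1 he2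
            refine Sym2.ind (fun u v => ?_) e
            intro he1 he2
            have hu12 := hinter u (P1.fst_mem_support_of_mem_edges he1)
              (P2.fst_mem_support_of_mem_edges he2)
            have hv12 := hinter v (P1.snd_mem_support_of_mem_edges he1)
              (P2.snd_mem_support_of_mem_edges he2)
            have hadjuv : Γ.Adj u v := P1.adj_of_mem_edges he1
            rcases hu12 with rfl | rfl <;> rcases hv12 with rfl | rfl
            · exact Γ.irrefl hadjuv
            · exact hnadjxy hadjuv
            · exact hnadjxy hadjuv.symm
            · exact Γ.irrefl hadjuv
          · intro h
            have h1 := congrArg Walk.length h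
            rw [Walk.length_append] at h1
            simp only [Walk.length_nil] at h1
            omega
          · rw [Walk.tail_support_append]
            refine List.Nodup.append (hP1path.support_nodup.tail) (hP2path.support_nodup.tail) ?_
            intro z hz1 hz2
            have hz1' : z ∈ P1.support := List.mem_of_mem_tail hz1
            have hz2' : z ∈ P2.support := List.mem_of_mem_tail hz2
            rcases hinter z hz1' hz2' with rfl | rfl
            · have := hP1path.support_nodup
              rw [P1.support_eq_cons] at this
              exact (List.nodup_cons.1 this).1 hz1
            · have := hP2path.support_nodup
              rw [P2.support_eq_cons] at this
              exact (List.nodup_cons.1 this).1 hz2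
        have hlen4 : 4 ≤ (P1.append P2).length := by
          rw [Walk.length_append]; omega
        obtain ⟨u, v, hu, hv, hadjuv, hedge⟩ := hchordal x (P1.append P2) hcyc hlen4
        have hmemuv : ∀ z, z ∈ (P1.append P2).support → z ∈ P1.support ∨ z ∈ P2.support := by
          intro z hz
          rw [Walk.mem_support_append_iff] at hz
          exact hz
        have hedge1 : s(u, v) ∉ P1.edges := by
          intro h
          exact hedge (by rw [Walk.edges_append]; exact List.mem_append_left _ h)
        have hedge2 : s(u, v) ∉ P2.edges := by
          intro h
          exact hedge (by rw [Walk.edges_append]; exact List.mem_append_right _ h)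
        have hNoChord1 : ∀ u v, u ∈ P1.support → v ∈ P1.support → Γ.Adj u v →
            s(u, v) ∈ P1.edges := by
          intro u v hu hv hadj
          by_contra hne
          obtain ⟨Q, hQsup, hQlen⟩ := exists_shorter P1 hu hv hadj hne
          have hmin : Nat.find hexA ≤ Q.length :=
            Nat.find_min' hexA ⟨Q, fun z hz => hP1sup z (hQsup z hz), rfl⟩
          omega
        have hNoChord2 : ∀ u v, u ∈ P2.support → v ∈ P2.support → Γ.Adj u v →
            s(u, v) ∈ P2.edges := by
          intro u v hu hv hadj
          by_contra hne
          obtain ⟨Q, hQsup, hQlen⟩ := exists_shorter P2 hu hv hadj hne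
          have hmin : Nat.find hexB ≤ Q.length :=
            Nat.find_min' hexB ⟨Q, fun z hz => hP2sup z (hQsup z hz), rfl⟩
          omega
        rcases hmemuv u hu with hu1 | hu2 <;> rcases hmemuv v hv with hv1 | hv2
        · exact hedge1 (hNoChord1 u v hu1 hv1 hadjuv)
        · by_cases h1 : v ∈ P1.support
          · exact hedge1 (hNoChord1 u v hu1 h1 hadjuv)
          by_cases h2 : u ∈ P2.support
          · exact hedge2 (hNoChord2 u v h2 hv2 hadjuv)
          have huA : u ∈ A := by
            have h3 := hP1sup u hu1
            rw [Finset.mem_insert, Finset.mem_insert] at h3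
            rcases h3 with rfl | rfl | h3
            · exact absurd P2.end_mem_support h2
            · exact absurd P2.start_mem_support h2
            · exact h3
          have hvB : v ∈ B := by
            have h3 := hP2sup v hv2
            rw [Finset.mem_insert, Finset.mem_insert] at h3
            rcases h3 with rfl | rfl | h3
            · exact absurd P1.end_mem_support h1
            · exact absurd P1.start_mem_support h1
            · exact h3
          exact hABdisj v (hAclosed u v huA hadjuv (hBS v hvB)) hvB
        · by_cases h1 : u ∈ P1.support
          · exact hedge1 (hNoChord1 u v h1 hv1 hadjuv)
          by_cases h2 : v ∈ P2.support
          · exact hedge2 (hNoChord2 u v hu2 h2 hadjuv)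
          have hvA : v ∈ A := by
            have h3 := hP1sup v hv1
            rw [Finset.mem_insert, Finset.mem_insert] at h3
            rcases h3 with rfl | rfl | h3
            · exact absurd P2.end_mem_support h2
            · exact absurd P2.start_mem_support h2
            · exact h3
          have huB : u ∈ B := by
            have h3 := hP2sup u hu2
            rw [Finset.mem_insert, Finset.mem_insert] at h3
            rcases h3 with rfl | rfl | h3
            · exact absurd P1.end_mem_support h1
            · exact absurd P1.start_mem_support h1
            · exact h3
          exact hABdisj u (hAclosed v u hvA hadjuv.symm (hBS u huB)) huB
        · exact hedge2 (hNoChord2 u v hu2 hv2 hadjuv)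
      -- counting
      have hSsubKB : S ⊆ Finset.univ \ A :=
        fun s hs => Finset.mem_sdiff.2 ⟨Finset.mem_univ _, fun h => hAS s h hs⟩
      have hsplitC : ∀ C : Finset α, C ≠ ∅ → IsCompleteSet Γ C →
          C ⊆ A ∪ S ∨ C ⊆ Finset.univ \ A := by
        intro C hCne hCcomp
        by_cases hCA : ∃ u ∈ C, u ∈ A
        · obtain ⟨u, huC, huA⟩ := hCA
          left
          intro c hc
          rw [Finset.mem_union]
          by_cases hcS : c ∈ S
          · exact Or.inr hcS
          by_cases hcu : c = u
          · exact Or.inl (hcu ▸ huA)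
          · exact Or.inl (hAclosed u c huA (hCcomp u huC c hc (fun h => hcu h.symm)) hcS)
        · push_neg at hCA
          right
          exact fun c hc => Finset.mem_sdiff.2 ⟨Finset.mem_univ _, hCA c hc⟩
      have hU : ((A ∪ S).powerset.filter (fun C => C ≠ ∅ ∧ IsCompleteSet Γ C)) ∪
          ((Finset.univ \ A).powerset.filter (fun C => C ≠ ∅ ∧ IsCompleteSet Γ C))
          = Finset.univ.powerset.filter (fun C => C ≠ ∅ ∧ IsCompleteSet Γ C) := by
        ext C
        simp only [Finset.mem_union, Finset.mem_filter, Finset.mem_powerset]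
        constructor
        · rintro (⟨h1, h2⟩ | ⟨h1, h2⟩) <;> exact ⟨Finset.subset_univ _, h2⟩
        · rintro ⟨-, h2⟩
          rcases hsplitC C h2.1 h2.2 with h | h
          · exact Or.inl ⟨h, h2⟩
          · exact Or.inr ⟨h, h2⟩
      have hKAint : (A ∪ S) ∩ (Finset.univ \ A) = S := by
        ext z
        simp only [Finset.mem_inter, Finset.mem_union, Finset.mem_sdiff, Finset.mem_univ,
          true_and]
        constructor
        · rintro ⟨h1 | h1, h2⟩
          · exact absurd h1 h2
          · exact h1
        · intro h
          exact ⟨Or.inr h, fun hA' => hAS z hA' h⟩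
      have hI : ((A ∪ S).powerset.filter (fun C => C ≠ ∅ ∧ IsCompleteSet Γ C)) ∩
          ((Finset.univ \ A).powerset.filter (fun C => C ≠ ∅ ∧ IsCompleteSet Γ C))
          = S.powerset.filter (fun C => C ≠ ∅ ∧ IsCompleteSet Γ C) := by
        ext C
        simp only [Finset.mem_inter, Finset.mem_filter, Finset.mem_powerset]
        constructor
        · rintro ⟨⟨h1, h2⟩, ⟨h3, -⟩⟩
          refine ⟨?_, h2⟩
          rw [← hKAint]
          exact Finset.subset_inter h1 h3
        · rintro ⟨h1, h2⟩
          exact ⟨⟨h1.trans Finset.subset_union_right, h2⟩, ⟨h1.trans hSsubKB, h2⟩⟩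
      have hsum := Finset.sum_union_inter (s₁ := (A ∪ S).powerset.filter
          (fun C => C ≠ ∅ ∧ IsCompleteSet Γ C))
        (s₂ := (Finset.univ \ A).powerset.filter (fun C => C ≠ ∅ ∧ IsCompleteSet Γ C))
        (f := fun C : Finset α => (-1 : ℤ) ^ (C.card - 1))
      rw [hU, hI] at hsum
      -- reachability within A
      have hreachA : ∀ x ∈ A, WalkIn Γ A a x := by
        intro x hx
        obtain ⟨w, hw⟩ := (hmemA x).1 hx
        exact ⟨w, walkGen A hAclosed a x w hw haA⟩
      -- piece A ∪ S
      have hKA1 : cliqueSum Γ (A ∪ S) = 1 := by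
        rw [← cliqueSum_induce]
        apply ih
        · rw [card_coe_set]
          have hb : b ∉ A ∪ S := by
            rw [Finset.mem_union]
            rintro (h | h)
            exacts [hbA h, hbS h]
          have hlt : (A ∪ S).card < Fintype.card α := by
            rw [← Finset.card_univ]
            exact Finset.card_lt_card ⟨Finset.subset_univ _,
              fun h => hb (h (Finset.mem_univ b))⟩
          omega
        · have hto_a : ∀ x ∈ A ∪ S, WalkIn Γ (A ∪ S) x a := by
            intro x hx
            rcases Finset.mem_union.1 hx with hxA' | hxS'
            · exact ((hreachA x hxA').mono Finset.subset_union_left).symm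
            · obtain ⟨c, hcA, hadj⟩ := hSA x hxS'
              have h1 : WalkIn Γ (A ∪ S) a c :=
                (hreachA c hcA).mono Finset.subset_union_left
              exact ((h1.adjExtend hadj.symm hx).symm)
          refine connected_of_walkIn ⟨a, Finset.mem_union_left _ haA⟩ ?_
          intro x hx y hy
          exact (hto_a x hx).trans (hto_a y hy).symm
        · exact isChordal_induce hchordal _
      -- piece univ \ A
      have hentry : ∀ (p q : α) (w : Γ.Walk p q), p ∉ A → q ∈ A →
          ∃ s ∈ S, WalkIn Γ (Finset.univ \ A) p s := by
        intro p q w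
        induction w with
        | nil => intro hp hq; exact absurd hq hp
        | @cons u c v h w ih' =>
          intro hp hq
          by_cases hc : c ∈ A
          · have hpS : u ∈ S := by
              by_contra hpS
              exact hp (hAclosed c u hc h.symm hpS)
            exact ⟨u, hpS, walkIn_refl (Finset.mem_sdiff.2 ⟨Finset.mem_univ _, hp⟩)⟩
          · obtain ⟨s, hs, w', hw'⟩ := ih' hc hq
            refine ⟨s, hs, Walk.cons h w', fun z hz => ?_⟩
            rw [Walk.support_cons, List.mem_cons] at hz
            rcases hz with rfl | hz
            · exact Finset.mem_sdiff.2 ⟨Finset.mem_univ _, hp⟩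
            · exact hw' z hz
      have htoS : ∀ z ∈ Finset.univ \ A, ∃ s ∈ S, WalkIn Γ (Finset.univ \ A) z s := by
        intro z hz
        rw [Finset.mem_sdiff] at hz
        obtain ⟨w⟩ := hconn.preconnected z a
        exact hentry z a w hz.2 haA
      have hKB1 : cliqueSum Γ (Finset.univ \ A) = 1 := by
        rw [← cliqueSum_induce]
        apply ih
        · rw [card_coe_set]
          have ha' : a ∉ Finset.univ \ A := fun h => (Finset.mem_sdiff.1 h).2 haA
          have hlt : (Finset.univ \ A).card < Fintype.card α := by
            rw [← Finset.card_univ]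
            exact Finset.card_lt_card ⟨Finset.subset_univ _,
              fun h => ha' (h (Finset.mem_univ a))⟩
          omega
        · refine connected_of_walkIn ⟨b, Finset.mem_sdiff.2
            ⟨Finset.mem_univ _, hbA⟩⟩ ?_
          intro x hx y hy
          obtain ⟨s1, hs1, hw1⟩ := htoS x hx
          obtain ⟨s2, hs2, hw2⟩ := htoS y hy
          have hs12 : WalkIn Γ (Finset.univ \ A) s1 s2 := by
            by_cases h : s1 = s2
            · subst h; exact walkIn_refl (hSsubKB hs1)
            · exact (walkIn_refl (hSsubKB hs1)).adjExtend
                (hSclique s1 hs1 s2 hs2 h) (hSsubKB hs2)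
          exact (hw1.trans hs12).trans hw2.symm
        · exact isChordal_induce hchordal _
      have hS1 : cliqueSum Γ S = 1 := completeSet_sum Γ hSclique hSne
      rw [cliqueSum_eq] at hKA1 hKB1 hS1 ⊢
      omega




end CliqueAux

/-- If the subgraph induced on a nonempty `H ⊆ V` is connected and chordal, then the
alternating sum `Σ_C (−1)^{|C|−1}` over all nonempty complete subsets `C ⊆ H` equals 1. -/
theorem alternating_clique_sum_eq_one {V : Type} [Fintype V] [DecidableEq V]
    (G : SimpleGraph V) [DecidableRel G.Adj] (H : Finset V) (hH : H.Nonempty)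
    (hconn : (G.induce (H : Set V)).Connected)
    (hchordal : IsChordal (G.induce (H : Set V))) :
    ∑ C ∈ H.powerset.filter (fun C => C ≠ ∅ ∧ IsCompleteSet G C),
      (-1 : ℤ) ^ (C.card - 1) = 1 := by
  have h1 := CliqueAux.main (Fintype.card ((H : Set V) : Type)) ((H : Set V) : Type)
    (G.induce (H : Set V)) le_rfl hconn hchordal
  rw [CliqueAux.cliqueSum_induce] at h1
  rwa [CliqueAux.cliqueSum_eq] at h1
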